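/- Reduction in SF-calculus is confluent: for any SF-terms u, v, v', if u →* v and u →* v', then there exists an SF-term w such that v →* w and v' →* w. -/

import Mathlib

/-!
SF-combinatory calculus (Given-Wilson & Jay), unlabelled.
-/

namespace SFCalc

/-- SF-terms: built from the two atoms `S` and `F` by binary application. -/
inductive SF : Type
  | S
  | F
  | app (a b : SF)
  deriving DecidableEq

/-- Factorable forms: terms of the shape `S`, `S u`, `S u v`, `F`, `F u`
or `F u v`. -/
inductive Factorable : SF → Prop
  | S : Factorable .S
  | F : Factorable .F
  | S1 (u : SF) : Factorable (.app .S u)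
  | F1 (u : SF) : Factorable (.app .F u)
  | S2 (u v : SF) : Factorable (.app (.app .S u) v)
  | F2 (u v : SF) : Factorable (.app (.app .F u) v)

/-- Top-level reduction rules: `S f g x → f x (g x)`; `F f x y → x` when `f`
is the atom `S` or the atom `F`; `F (u v) x y → y u v` when `u v` is a
factorable form. -/
inductive Red : SF → SF → Prop
  | S (f g x : SF) :
      Red (.app (.app (.app .S f) g) x) (.app (.app f x) (.app g x))
  | Fatom (f x y : SF) (hf : f = .S ∨ f = .F) :
      Red (.app (.app (.app .F f) x) y) x
  | Ffact (u v x y : SF) (hf : Factorable (.app u v)) :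
      Red (.app (.app (.app .F (.app u v)) x) y) (.app (.app y u) v)

/-- One-step reduction: the closure of the rules under arbitrary term
contexts. -/
inductive Step : SF → SF → Prop
  | red {a b : SF} : Red a b → Step a b
  | appL {a a' : SF} (b : SF) : Step a a' → Step (.app a b) (.app a' b)
  | appR (a : SF) {b b' : SF} : Step b b' → Step (.app a b) (.app a b')

/-- `→*`: the reflexive-transitive closure of one-step reduction. -/
def Steps : SF → SF → Prop := Relation.ReflTransGen Step

/-- Parallel reduction. -/
inductive Par : SF → SF → Prop
  | S : Par .S .S
  | F : Par .F .F
  | app {a a' b b' : SF} : Par a a' → Par b b' → Par (.app a b) (.app a' b')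
  | redS {f f' g g' x x' : SF} : Par f f' → Par g g' → Par x x' →
      Par (.app (.app (.app .S f) g) x) (.app (.app f' x') (.app g' x'))
  | redFatom {f x x' : SF} (y : SF) (hf : f = .S ∨ f = .F) : Par x x' →
      Par (.app (.app (.app .F f) x) y) x'
  | redFfact {u u' v v' y y' : SF} (x : SF) (hf : Factorable (.app u v)) :
      Par u u' → Par v v' → Par y y' →
      Par (.app (.app (.app .F (.app u v)) x) y) (.app (.app y' u') v')

theorem par_refl (a : SF) : Par a a := by
  induction a with
  | S => exact .S
  | F => exact .F
  | app a b iha ihb => exact .app iha ihb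

theorem par_fact {u v w : SF} (hf : Factorable (.app u v)) (h : Par (.app u v) w) :
    ∃ u' v', w = .app u' v' ∧ Par u u' ∧ Par v v' ∧ Factorable (.app u' v') := by
  cases hf with
  | S1 => cases h with
    | app h1 h2 => cases h1; exact ⟨_, _, rfl, .S, h2, .S1 _⟩
  | F1 => cases h with
    | app h1 h2 => cases h1; exact ⟨_, _, rfl, .F, h2, .F1 _⟩
  | S2 => cases h with
    | app h1 h2 =>
      cases h1 with
      | app h3 h4 => cases h3; exact ⟨_, _, rfl, .app .S h4, h2, .S2 _ _⟩
  | F2 => cases h with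
    | app h1 h2 =>
      cases h1 with
      | app h3 h4 => cases h3; exact ⟨_, _, rfl, .app .F h4, h2, .F2 _ _⟩

theorem Factorable_of2 {u v u' v' : SF} (hf : Factorable (.app u v))
    (hu : Par u u') (_hv : Par v v') : Factorable (.app u' v') := by
  cases hf with
  | S1 => cases hu; exact .S1 _
  | F1 => cases hu; exact .F1 _
  | S2 => cases hu with | app h1 h2 => cases h1; exact .S2 _ _
  | F2 => cases hu with | app h1 h2 => cases h1; exact .F2 _ _

theorem par_fact_inv {u v u' v' : SF} (hf : Factorable (.app u v))
    (h : Par (.app u v) (.app u' v')) : Par u u' ∧ Par v v' := by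
  obtain ⟨a, b, heq, h1, h2, _⟩ := par_fact hf h
  cases heq; exact ⟨h1, h2⟩

theorem par_diamond : ∀ {a b c : SF}, Par a b → Par a c → ∃ d, Par b d ∧ Par c d := by
  intro a b c h1 h2
  induction h1 generalizing c with
  | S => cases h2; exact ⟨.S, .S, .S⟩
  | F => cases h2; exact ⟨.F, .F, .F⟩
  | app hp hq ihp ihq =>
    rename_i p p' q q'
    cases h2 with
    | app hp2 hq2 =>
      obtain ⟨d1, hd1, hd1'⟩ := ihp hp2
      obtain ⟨d2, hd2, hd2'⟩ := ihq hq2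
      exact ⟨.app d1 d2, .app hd1 hd2, .app hd1' hd2'⟩
    | redS hf2 hg2 hx2 =>
      -- p = S f g, q = x
      cases hp with
      | app h1 hg1 =>
        cases h1 with
        | app h3 hf1 =>
          cases h3
          obtain ⟨d, hd, hd'⟩ := ihp (Par.app (Par.app Par.S hf2) hg2)
          cases hd with
          | app hd1 hgd =>
            cases hd1 with
            | app hd3 hfd =>
              cases hd3
              cases hd' with
              | app hd1' hgd' =>
                cases hd1' with
                | app hd3' hfd' =>
                  obtain ⟨xd, hxd, hxd'⟩ := ihq hx2
                  exact ⟨.app (.app _ xd) (.app _ xd),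
                    Par.redS hfd hgd hxd,
                    Par.app (Par.app hfd' hxd') (Par.app hgd' hxd')⟩
    | redFatom y hf hx2 =>
      -- p = app (app F f) x, q = y
      cases hp with
      | app h1 hx1 =>
        cases h1 with
        | app h3 hf1 =>
          cases h3
          obtain ⟨d, hd, hd'⟩ := ihp (Par.app (Par.app Par.F hf1) hx2)
          cases hd with
          | app hd1 hxd =>
            cases hd1 with
            | app hd3 hfd =>
              cases hd3
              cases hd' with
              | app hd1' hxd' =>
                -- need f' = S or F: from hf and hf1
                rcases hf with rfl | rfl
                · cases hf1; cases hfd;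
                  exact ⟨_, Par.redFatom _ (Or.inl rfl) hxd, hxd'⟩
                · cases hf1; cases hfd;
                  exact ⟨_, Par.redFatom _ (Or.inr rfl) hxd, hxd'⟩
    | redFfact x hfab hu2 hv2 hy2 =>
      -- p = app (app F (app u v)) x, q = y
      cases hp with
      | app h1 hx1 =>
        cases h1 with
        | app h3 hw1 =>
          cases h3
          obtain ⟨u1, v1, rfl, hu1, hv1, hfact1⟩ := par_fact hfab hw1
          obtain ⟨d, hd, hd'⟩ := ihp (Par.app (Par.app Par.F (Par.app hu2 hv2)) (par_refl x))
          cases hd with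
          | app hd1 hxd =>
            cases hd1 with
            | app hd3 hwd =>
              cases hd3
              obtain ⟨ud, vd, rfl, hud, hvd, _⟩ := par_fact hfact1 hwd
              cases hd' with
              | app hd1' hxd' =>
                cases hd1' with
                | app hd3' hwd' =>
                  obtain ⟨hud', hvd'⟩ := par_fact_inv (Factorable_of2 hfab hu2 hv2) hwd'
                  · obtain ⟨yd, hyd, hyd'⟩ := ihq hy2
                    exact ⟨.app (.app yd ud) vd,
                      Par.redFfact _ hfact1 hud hvd hyd,
                      Par.app (Par.app hyd' hud') hvd'⟩
  | redS hf hg hx ihf ihg ihx =>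
    rename_i f f' g g' x x'
    cases h2 with
    | app hp2 hq2 =>
      cases hp2 with
      | app h1 hg2 =>
        cases h1 with
        | app h3 hf2 =>
          cases h3
          obtain ⟨fd, hfd, hfd'⟩ := ihf hf2
          obtain ⟨gd, hgd, hgd'⟩ := ihg hg2
          obtain ⟨xd, hxd, hxd'⟩ := ihx hq2
          exact ⟨.app (.app fd xd) (.app gd xd),
            Par.app (Par.app hfd hxd) (Par.app hgd hxd),
            Par.redS hfd' hgd' hxd'⟩
    | redS hf2 hg2 hx2 =>
      obtain ⟨fd, hfd, hfd'⟩ := ihf hf2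
      obtain ⟨gd, hgd, hgd'⟩ := ihg hg2
      obtain ⟨xd, hxd, hxd'⟩ := ihx hx2
      exact ⟨.app (.app fd xd) (.app gd xd),
        Par.app (Par.app hfd hxd) (Par.app hgd hxd),
        Par.app (Par.app hfd' hxd') (Par.app hgd' hxd')⟩
  | redFatom y hf hx ihx =>
    rename_i f x x'
    cases h2 with
    | app hp2 hq2 =>
      cases hp2 with
      | app h1 hx2 =>
        cases h1 with
        | app h3 hf2 =>
          cases h3
          obtain ⟨xd, hxd, hxd'⟩ := ihx hx2
          rcases hf with rfl | rfl
          · cases hf2; exact ⟨xd, hxd, Par.redFatom _ (Or.inl rfl) hxd'⟩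
          · cases hf2; exact ⟨xd, hxd, Par.redFatom _ (Or.inr rfl) hxd'⟩
    | redFatom y2 hf2 hx2 =>
      obtain ⟨xd, hxd, hxd'⟩ := ihx hx2
      exact ⟨xd, hxd, hxd'⟩
    | redFfact x2 hfab hu2 hv2 hy2 =>
      rcases hf with h | h <;> exact SF.noConfusion h
  | redFfact x hfab hu hv hy ihu ihv ihy =>
    rename_i u u' v v' y y'
    cases h2 with
    | app hp2 hq2 =>
      cases hp2 with
      | app h1 hx2 =>
        cases h1 with
        | app h3 hw2 =>
          cases h3
          obtain ⟨u2, v2, rfl, hu2, hv2, hfact2⟩ := par_fact hfab hw2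
          obtain ⟨ud, hud, hud'⟩ := ihu hu2
          obtain ⟨vd, hvd, hvd'⟩ := ihv hv2
          obtain ⟨yd, hyd, hyd'⟩ := ihy hq2
          exact ⟨.app (.app yd ud) vd,
            Par.app (Par.app hyd hud) hvd,
            Par.redFfact _ hfact2 hud' hvd' hyd'⟩
    | redFatom y2 hf2 hx2 => rcases hf2 with h | h <;> exact SF.noConfusion h
    | redFfact x2 hfab2 hu2 hv2 hy2 =>
      obtain ⟨ud, hud, hud'⟩ := ihu hu2
      obtain ⟨vd, hvd, hvd'⟩ := ihv hv2
      obtain ⟨yd, hyd, hyd'⟩ := ihy hy2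
      exact ⟨.app (.app yd ud) vd,
        Par.app (Par.app hyd hud) hvd,
        Par.app (Par.app hyd' hud') hvd'⟩

theorem steps_app {a a' b b' : SF} (h1 : Steps a a') (h2 : Steps b b') :
    Steps (.app a b) (.app a' b') := by
  exact Relation.ReflTransGen.trans
    (Relation.ReflTransGen.lift (fun t => SF.app t b) (fun _ _ h => Step.appL b h) _ _ h1)
    (Relation.ReflTransGen.lift (fun t => SF.app a' t) (fun _ _ h => Step.appR a' h) _ _ h2)

theorem red_par {a b : SF} (h : Red a b) : Par a b := by
  cases h with
  | S f g x => exact Par.redS (par_refl f) (par_refl g) (par_refl x)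
  | Fatom f1 x1 y1 hf1 => exact Par.redFatom _ hf1 (par_refl b)
  | Ffact u v x y hf => exact Par.redFfact _ hf (par_refl u) (par_refl v) (par_refl y)

theorem step_par {a b : SF} (h : Step a b) : Par a b := by
  induction h with
  | red h => exact red_par h
  | appL b _ ih => exact Par.app ih (par_refl b)
  | appR a _ ih => exact Par.app (par_refl a) ih

theorem par_steps {a b : SF} (h : Par a b) : Steps a b := by
  induction h with
  | S => exact Relation.ReflTransGen.refl
  | F => exact Relation.ReflTransGen.refl
  | app _ _ ih1 ih2 => exact steps_app ih1 ih2
  | redS _ _ _ ihf ihg ihx =>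
    exact Relation.ReflTransGen.head (Step.red (Red.S _ _ _))
      (steps_app (steps_app ihf ihx) (steps_app ihg ihx))
  | redFatom y hf _ ihx =>
    exact Relation.ReflTransGen.head (Step.red (Red.Fatom _ _ y hf)) ihx
  | redFfact x hf _ _ _ ihu ihv ihy =>
    exact Relation.ReflTransGen.head (Step.red (Red.Ffact _ _ x _ hf))
      (steps_app (steps_app ihy ihu) ihv)

/-- Reflexive-transitive closure of parallel reduction. -/
def Pars : SF → SF → Prop := Relation.ReflTransGen Par

theorem steps_pars {a b : SF} (h : Steps a b) : Pars a b :=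
  Relation.ReflTransGen.mono (fun _ _ h => step_par h) _ _ h

theorem pars_steps {a b : SF} (h : Pars a b) : Steps a b := by
  induction h with
  | refl => exact Relation.ReflTransGen.refl
  | tail _ hp ih => exact Relation.ReflTransGen.trans ih (par_steps hp)

theorem par_strip {a b c : SF} (h1 : Par a b) (h2 : Pars a c) :
    ∃ d, Pars b d ∧ Par c d := by
  induction h2 generalizing b with
  | refl => exact ⟨b, Relation.ReflTransGen.refl, h1⟩
  | tail _ hp ih =>
    obtain ⟨d', hd1, hd2⟩ := ih h1
    obtain ⟨e, he1, he2⟩ := par_diamond hd2 hp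
    exact ⟨e, Relation.ReflTransGen.tail hd1 he1, he2⟩

theorem pars_confluent {a b c : SF} (h1 : Pars a b) (h2 : Pars a c) :
    ∃ d, Pars b d ∧ Pars c d := by
  induction h1 generalizing c with
  | refl => exact ⟨c, h2, Relation.ReflTransGen.refl⟩
  | tail _ hp ih =>
    obtain ⟨d, hd1, hd2⟩ := ih h2
    obtain ⟨e, he1, he2⟩ := par_strip hp hd1
    exact ⟨e, he1, Relation.ReflTransGen.tail hd2 he2⟩

/-- **Confluence of SF-calculus**: for any SF-terms `u, v, v'`, if `u →* v`
and `u →* v'`, then there exists an SF-term `w` such that `v →* w` and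
`v' →* w`. -/
theorem sf_confluence (u v v' : SF) (h₁ : Steps u v) (h₂ : Steps u v') :
    ∃ w : SF, Steps v w ∧ Steps v' w := by
  obtain ⟨w, hw1, hw2⟩ := pars_confluent (steps_pars h₁) (steps_pars h₂)
  exact ⟨w, pars_steps hw1, pars_steps hw2⟩

end SFCalc
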